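/- arXiv:1608.08580 — 3 statements merged into one kernel-verified Lean document; each statement's English description precedes it below -/
import Mathlib

section
/- Let p be a prime number, γ a natural number, and (λ_e) a sequence of real numbers such that the sequence (λ_e / p^{eγ}) is bounded. If there exists a positive constant C such that λ_{e+1}/p^{(e+1)γ} ≤ λ_e/p^{eγ} + C/p^e for all e, then the limit λ = lim_{e→∞} λ_e/p^{eγ} exists, and λ − λ_e/p^{eγ} ≤ 2C/p^e for all e. -/
open Filter

/-- Lemma 3.5(1) of Polstra–Tucker: if the normalized sequence `λ_e / p^{eγ}` is bounded
and satisfies `λ_{e+1}/p^{(e+1)γ} ≤ λ_e/p^{eγ} + C/p^e`, then it converges to a limit `λ`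
with `λ − λ_e/p^{eγ} ≤ 2C/p^e` for every `e`. -/
theorem sequence_lemma_one (p : ℕ) (hp : p.Prime) (γ : ℕ) (l : ℕ → ℝ)
    (hbdd : ∃ B : ℝ, ∀ e : ℕ, |l e / (p : ℝ) ^ (e * γ)| ≤ B)
    (C : ℝ) (hC : 0 < C)
    (hdec : ∀ e : ℕ, l (e + 1) / (p : ℝ) ^ ((e + 1) * γ) ≤ l e / (p : ℝ) ^ (e * γ) + C / (p : ℝ) ^ e) :
    ∃ L : ℝ, Tendsto (fun e : ℕ => l e / (p : ℝ) ^ (e * γ)) atTop (nhds L) ∧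
      ∀ e : ℕ, L - l e / (p : ℝ) ^ (e * γ) ≤ 2 * C / (p : ℝ) ^ e := by
  obtain ⟨B, hB⟩ := hbdd
  have hp2 : (2 : ℝ) ≤ (p : ℝ) := by exact_mod_cast hp.two_le
  have hp1 : (1 : ℝ) < (p : ℝ) := by linarith
  have hp0 : (0 : ℝ) < (p : ℝ) := by linarith
  set a : ℕ → ℝ := fun e => l e / (p : ℝ) ^ (e * γ) with ha
  set K : ℝ := C * p / (p - 1) with hK
  have hKpos : 0 < K := by
    apply div_pos (by positivity) (by linarith)
  have hK2C : K ≤ 2 * C := by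
    rw [hK, div_le_iff₀ (by linarith)]
    nlinarith
  set b : ℕ → ℝ := fun e => a e + K / (p : ℝ) ^ e with hb
  have hpne : (p : ℝ) ≠ 0 := ne_of_gt hp0
  have hp1ne : (p : ℝ) - 1 ≠ 0 := by intro h; nlinarith
  have hKC : K / (p : ℝ) + C = K := by
    rw [hK]
    field_simp
    ring
  have key : ∀ e : ℕ, K / (p : ℝ) ^ (e + 1) + C / (p : ℝ) ^ e = K / (p : ℝ) ^ e := by
    intro e
    rw [pow_succ', ← div_div, ← add_div, hKC]
  have hanti : Antitone b := by
    apply antitone_nat_of_succ_le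
    intro e
    have h := hdec e
    calc b (e + 1) = a (e + 1) + K / (p : ℝ) ^ (e + 1) := rfl
      _ ≤ (a e + C / (p : ℝ) ^ e) + K / (p : ℝ) ^ (e + 1) := by
          exact add_le_add_left h _
      _ = a e + (K / (p : ℝ) ^ (e + 1) + C / (p : ℝ) ^ e) := by ring
      _ = b e := by rw [key e]
  have hbdd' : BddBelow (Set.range b) := by
    refine ⟨-B, ?_⟩
    rintro x ⟨e, rfl⟩
    have h1 := hB e
    have h2 : -B ≤ a e := by
      have := abs_le.mp h1
      linarith [this.1]
    have h3 : 0 < K / (p : ℝ) ^ e := by positivity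
    simp only [hb]
    linarith
  have hbL : Tendsto b atTop (nhds (⨅ e, b e)) :=
    tendsto_atTop_ciInf hanti hbdd'
  set L : ℝ := ⨅ e, b e with hL
  have htail : Tendsto (fun e : ℕ => K / (p : ℝ) ^ e) atTop (nhds 0) := by
    have : Tendsto (fun e : ℕ => (1 / (p : ℝ)) ^ e) atTop (nhds 0) := by
      apply tendsto_pow_atTop_nhds_zero_of_lt_one
      · positivity
      · rw [div_lt_one hp0]; linarith
    have h := this.const_mul K
    simp only [mul_zero] at h
    convert h using 2 with e
    rw [div_pow, one_pow, mul_one_div]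
  have haL : Tendsto a atTop (nhds L) := by
    have : Tendsto (fun e => b e - K / (p : ℝ) ^ e) atTop (nhds (L - 0)) :=
      hbL.sub htail
    simp only [sub_zero] at this
    convert this using 2 with e
    simp [hb]
  refine ⟨L, haL, fun e => ?_⟩
  have hLb : L ≤ b e := ciInf_le hbdd' e
  have hpe : (0 : ℝ) < (p : ℝ) ^ e := by positivity
  have : K / (p : ℝ) ^ e ≤ 2 * C / (p : ℝ) ^ e := by gcongr
  have hbe : b e = a e + K / (p : ℝ) ^ e := rfl
  have h4 : L - a e ≤ K / (p : ℝ) ^ e := by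
    have h5 := sub_le_sub_right hLb (a e)
    rw [hbe, add_sub_cancel_left] at h5
    exact h5
  exact le_trans h4 this
end

section
/- Let (R,𝔪) be a Noetherian local ring and M' → M → M'' → 0 a right exact sequence of finitely generated R-modules. Then frk(M'') ≤ frk(M) ≤ frk(M') + μ(M''), where frk(N) denotes the maximal rank of a free direct summand of N and μ denotes the minimal number of generators. -/
/-- The minimal number of generators of a module. -/
noncomputable def mu (R M : Type*) [Ring R] [AddCommGroup M] [Module R M] : ℕ :=
  sInf {n : ℕ | ∃ s : Finset M, s.card = n ∧ Submodule.span R (s : Set M) = ⊤}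

/-- The free rank of a module: the maximal rank of a free direct summand. -/
noncomputable def frk (R M : Type*) [Ring R] [AddCommGroup M] [Module R M] : ℕ :=
  sSup {n : ℕ | ∃ N N' : Submodule R M, IsCompl N N' ∧ Nonempty (N ≃ₗ[R] (Fin n → R))}

namespace FrkAux

open Function Submodule

variable {R : Type*} [CommRing R] {M : Type*} [AddCommGroup M] [Module R M]

/-- Membership in the `frk` index set is equivalent to the existence of a surjection onto a
finite free module. -/
theorem mem_iff {n : ℕ} :
    (∃ N N' : Submodule R M, IsCompl N N' ∧ Nonempty (N ≃ₗ[R] (Fin n → R))) ↔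
      ∃ ℓ : M →ₗ[R] (Fin n → R), Surjective ℓ := by
  constructor
  · rintro ⟨N, N', hc, ⟨e⟩⟩
    refine ⟨e.toLinearMap ∘ₗ (N.projectionOnto N' hc), fun y => ?_⟩
    refine ⟨(e.symm y : M), ?_⟩
    simp [Submodule.projectionOnto_apply_left]
  · rintro ⟨ℓ, hℓ⟩
    obtain ⟨s, hs⟩ := ℓ.exists_rightInverse_of_surjective (LinearMap.range_eq_top.2 hℓ)
    have hsec : ∀ y, ℓ (s y) = y := fun y => by
      simpa using LinearMap.congr_fun hs y
    have hinj : Injective s := fun a b h => by rw [← hsec a, ← hsec b, h]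
    refine ⟨LinearMap.range s, LinearMap.ker ℓ, ⟨?_, ?_⟩, ⟨(LinearEquiv.ofInjective s hinj).symm⟩⟩
    · rw [disjoint_iff]
      apply Submodule.eq_bot_iff _ |>.2
      rintro x ⟨⟨y, rfl⟩, hker⟩
      have : y = 0 := by rw [← hsec y]; exact hker
      simp [this]
    · rw [codisjoint_iff, eq_top_iff]
      rintro x -
      have h1 : x - s (ℓ x) ∈ LinearMap.ker ℓ := by simp [hsec]
      have h2 : s (ℓ x) ∈ LinearMap.range s := ⟨ℓ x, rfl⟩
      have : x = s (ℓ x) + (x - s (ℓ x)) := by abel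
      rw [this]
      exact Submodule.add_mem_sup h2 h1

theorem zero_mem :
    ∃ N N' : Submodule R M, IsCompl N N' ∧ Nonempty (N ≃ₗ[R] (Fin 0 → R)) :=
  mem_iff.2 ⟨0, fun y => ⟨0, Subsingleton.elim _ _⟩⟩

theorem bddAbove [Nontrivial R] [StrongRankCondition R] [Module.Finite R M] :
    BddAbove {n : ℕ | ∃ N N' : Submodule R M, IsCompl N N' ∧ Nonempty (N ≃ₗ[R] (Fin n → R))} := by
  obtain ⟨c, v, hv⟩ := Module.Finite.exists_fin (R := R) (M := M)
  refine ⟨c, fun n hn => ?_⟩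
  obtain ⟨ℓ, hℓ⟩ := mem_iff.1 hn
  set Φ := (Pi.basisFun R (Fin c)).constr ℕ v with hΦdef
  have hΦ : Surjective Φ := by
    have : LinearMap.range Φ = ⊤ := by rw [hΦdef, Module.Basis.constr_range, hv]
    exact LinearMap.range_eq_top.1 this
  have := card_le_of_surjective R (ℓ ∘ₗ Φ) (hℓ.comp hΦ)
  simpa using this

theorem mu_spec (R M : Type*) [Ring R] [AddCommGroup M] [Module R M] [Module.Finite R M] :
    ∃ s : Finset M, s.card = mu R M ∧ Submodule.span R (s : Set M) = ⊤ := by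
  have h : {n : ℕ | ∃ s : Finset M, s.card = n ∧ Submodule.span R (s : Set M) = ⊤}.Nonempty := by
    obtain ⟨s, hs⟩ := Module.Finite.fg_top (R := R) (M := M)
    exact ⟨s.card, s, rfl, hs⟩
  obtain ⟨s, hcard, hspan⟩ := Nat.sInf_mem h
  exact ⟨s, hcard, hspan⟩

end FrkAux

/-- For a right exact sequence `M' → M → M'' → 0` of finitely generated modules over a
Noetherian local ring, `frk(M'') ≤ frk(M) ≤ frk(M') + μ(M'')`. -/
theorem frk_right_exact {R : Type*} [CommRing R] [IsNoetherianRing R] [IsLocalRing R]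
    {M' M M'' : Type*} [AddCommGroup M'] [Module R M'] [AddCommGroup M] [Module R M]
    [AddCommGroup M''] [Module R M''] [Module.Finite R M'] [Module.Finite R M]
    [Module.Finite R M''] (f : M' →ₗ[R] M) (g : M →ₗ[R] M'')
    (hg : Function.Surjective g) (hexact : Function.Exact f g) :
    frk R M'' ≤ frk R M ∧ frk R M ≤ frk R M' + mu R M'' := by
  classical
  open Function Submodule IsLocalRing in
  constructor
  · -- `frk M'' ≤ frk M`
    refine csSup_le_csSup FrkAux.bddAbove ⟨0, FrkAux.zero_mem⟩ ?_
    intro n hn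
    obtain ⟨ℓ, hℓ⟩ := FrkAux.mem_iff.1 hn
    exact FrkAux.mem_iff.2 ⟨ℓ ∘ₗ g, hℓ.comp hg⟩
  · -- `frk M ≤ frk M' + mu M''`
    refine csSup_le ⟨0, FrkAux.zero_mem⟩ ?_
    intro n hn
    obtain ⟨ℓ, hℓ⟩ := FrkAux.mem_iff.1 hn
    obtain ⟨s, hscard, hsspan⟩ := FrkAux.mu_spec R M''
    set m := s.card with hm
    -- enumerate generators of `M''` and lift them to `M`
    set w'' : Fin m → M'' := fun i => (s.equivFin.symm i : M'') with hw''def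
    have hw''range : Set.range w'' = (s : Set M'') := by
      have h1 : Set.range w'' = Set.range ((↑) : s → M'') :=
        (s.equivFin.symm.surjective).range_comp _
      rw [h1]; ext x; simp
    choose w hw using fun i => hg (w'' i)
    -- Step A : range f ⊔ span (range w) = ⊤ in M
    have hA : LinearMap.range f ⊔ Submodule.span R (Set.range w) = ⊤ := by
      rw [eq_top_iff]
      rintro x -
      have hmap : Submodule.map g (Submodule.span R (Set.range w)) = ⊤ := by
        rw [Submodule.map_span, ← Set.range_comp]
        have : g ∘ w = w'' := funext hw
        rw [this, hw''range, hsspan]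
      have : g x ∈ Submodule.map g (Submodule.span R (Set.range w)) := by rw [hmap]; trivial
      obtain ⟨y, hy, hyx⟩ := this
      have hker : x - y ∈ LinearMap.ker g := by simp [hyx]
      rw [hexact.linearMap_ker_eq] at hker
      have hx : x = (x - y) + y := by abel
      rw [hx]
      exact Submodule.add_mem_sup hker hy
    -- Step B : push forward via ℓ to the free module `Fin n → R`
    set f' : M' →ₗ[R] (Fin n → R) := ℓ ∘ₗ f with hf'def
    set P := LinearMap.range f' with hPdef
    set u2 : Fin m → (Fin n → R) := fun i => ℓ (w i) with hu2def
    have hB : P ⊔ Submodule.span R (Set.range u2) = ⊤ := by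
      have h1 : Submodule.map ℓ (LinearMap.range f ⊔ Submodule.span R (Set.range w)) = ⊤ := by
        rw [hA, Submodule.map_top, LinearMap.range_eq_top.2 hℓ]
      rw [Submodule.map_sup, Submodule.map_span, ← Set.range_comp] at h1
      have h2 : Submodule.map ℓ (LinearMap.range f) = P := by
        rw [hPdef, hf'def, LinearMap.range_comp]
      have h3 : (ℓ ∘ w) = u2 := rfl
      rw [h2, h3] at h1
      exact h1
    -- reduce mod the maximal ideal
    set k := IsLocalRing.ResidueField R with hkdef
    have halg : Function.Surjective (algebraMap R k) := by
      rw [IsLocalRing.ResidueField.algebraMap_eq]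
      exact IsLocalRing.residue_surjective
    set ρ : (Fin n → R) →ₗ[R] (Fin n → k) :=
      LinearMap.pi (fun i => (Algebra.linearMap R k).comp (LinearMap.proj i)) with hρdef
    have hρapp : ∀ (x : Fin n → R) (i : Fin n), ρ x i = algebraMap R k (x i) := by
      intro x i; rfl
    have hρ : Surjective ρ := by
      intro y
      refine ⟨fun i => (halg (y i)).choose, ?_⟩
      funext i
      rw [hρapp]
      exact (halg (y i)).choose_spec
    -- the span over R of a set spanning over k is everything
    have hspanRk : ∀ t : Set (Fin n → k), Submodule.span k t = ⊤ →
        Submodule.span R t = ⊤ := by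
      intro t ht
      rw [eq_top_iff]
      rintro x -
      have hx : x ∈ Submodule.span k t := ht ▸ Submodule.mem_top
      induction hx using Submodule.span_induction with
      | mem y hy => exact Submodule.subset_span hy
      | zero => exact Submodule.zero_mem _
      | add y z _ _ hy hz => exact Submodule.add_mem _ hy hz
      | smul c y _ hy =>
        obtain ⟨r, rfl⟩ := halg c
        rw [algebraMap_smul]
        exact Submodule.smul_mem _ _ hy
    set A := Submodule.span k (ρ '' (P : Set (Fin n → R))) with hAdef
    set B := Submodule.span k (Set.range (fun i => ρ (u2 i))) with hBdef
    -- every element of A lifts to an element of P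
    have hliftA : ∀ y ∈ A, ∃ x ∈ P, ρ x = y := by
      intro y hy
      induction hy using Submodule.span_induction with
      | mem y hy =>
        obtain ⟨x, hx, rfl⟩ := hy
        exact ⟨x, hx, rfl⟩
      | zero => exact ⟨0, Submodule.zero_mem _, map_zero _⟩
      | add y z _ _ hy hz =>
        obtain ⟨a, ha, rfl⟩ := hy
        obtain ⟨b, hb, rfl⟩ := hz
        exact ⟨a + b, Submodule.add_mem _ ha hb, map_add _ _ _⟩
      | smul c y _ hy =>
        obtain ⟨a, ha, rfl⟩ := hy
        obtain ⟨r, rfl⟩ := halg c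
        exact ⟨r • a, Submodule.smul_mem _ _ ha, by rw [map_smul, algebraMap_smul]⟩
    -- A ⊔ B = ⊤
    have hAB : A ⊔ B = ⊤ := by
      rw [eq_top_iff]
      rintro y -
      obtain ⟨x, rfl⟩ := hρ y
      have hx : x ∈ P ⊔ Submodule.span R (Set.range u2) := hB ▸ Submodule.mem_top
      obtain ⟨a, ha, b, hb, rfl⟩ := Submodule.mem_sup.1 hx
      rw [map_add]
      refine Submodule.add_mem_sup ?_ ?_
      · exact Submodule.subset_span ⟨a, ha, rfl⟩
      · have h1 : ρ b ∈ Submodule.map ρ (Submodule.span R (Set.range u2)) :=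
          Submodule.mem_map_of_mem hb
        rw [Submodule.map_span, ← Set.range_comp] at h1
        have h2 : Submodule.span R (Set.range (ρ ∘ u2)) ≤
            (Submodule.span k (Set.range (fun i => ρ (u2 i)))).restrictScalars R :=
          Submodule.span_le_restrictScalars R k _
        exact h2 h1
    -- dimension counting over the residue field
    have hfinB : Module.finrank k B ≤ m := by
      rw [hBdef]
      refine (finrank_span_le_card _).trans ?_
      rw [Set.toFinset_range]
      exact (Finset.card_image_le).trans (by simp)
    have hfinrank_top : Module.finrank k (Fin n → k) = n := Module.finrank_fin_fun k
    have hfinAB : n ≤ Module.finrank k A + Module.finrank k B := by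
      have h1 := Submodule.finrank_sup_add_finrank_inf_eq A B
      have h2 : Module.finrank k ↥(A ⊔ B) = n := by
        rw [hAB, finrank_top, hfinrank_top]
      omega
    set d := n - m with hddef
    have hd : d ≤ Module.finrank k A := by omega
    -- pick d linearly independent vectors in A
    set bA := Module.finBasis k A with hbAdef
    set e : Fin d → (Fin n → k) := fun i => (bA (Fin.castLE hd i) : Fin n → k) with hedef
    have he_indep : LinearIndependent k e := by
      have h1 : LinearIndependent k (fun i : Fin (Module.finrank k A) => (bA i : Fin n → k)) :=
        bA.linearIndependent.map' A.subtype (Submodule.ker_subtype A)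
      exact h1.comp (Fin.castLE hd) (Fin.castLE_injective hd)
    have he_memA : ∀ i, e i ∈ A := fun i => (bA (Fin.castLE hd i)).2
    set E := Submodule.span k (Set.range e) with hEdef
    have hE_finrank : Module.finrank k E = d := by
      rw [hEdef, finrank_span_eq_card he_indep, Fintype.card_fin]
    obtain ⟨C, hC⟩ := Submodule.exists_isCompl E
    set r := Module.finrank k C with hrdef
    have hdr : d + r = n := by
      have := Submodule.finrank_add_eq_of_isCompl hC
      rw [hE_finrank, hfinrank_top] at this
      omega
    set bC := Module.finBasis k C with hbCdef
    set v : Fin d ⊕ Fin r → (Fin n → k) :=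
      Sum.elim e (fun j => (bC j : Fin n → k)) with hvdef
    have hv_span : Submodule.span k (Set.range v) = ⊤ := by
      rw [hvdef, Set.Sum.elim_range, Submodule.span_union]
      have h1 : Submodule.span k (Set.range (fun j : Fin r => (bC j : Fin n → k))) = C := by
        have h0 : Set.range (fun j : Fin r => (bC j : Fin n → k)) =
            C.subtype '' Set.range bC := by
          rw [← Set.range_comp]
          rfl
        rw [h0, Submodule.span_image, bC.span_eq, Submodule.map_subtype_top]
      rw [h1, ← hEdef]
      exact hC.codisjoint.eq_top
    -- lift v to `Fin n → R`, with first components inside P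
    set ubar : Fin d ⊕ Fin r → (Fin n → R) :=
      Sum.elim (fun i => (hliftA (e i) (he_memA i)).choose)
        (fun j => (hρ (bC j : Fin n → k)).choose) with hubardef
    have hubarA : ∀ i, ubar (.inl i) ∈ P := fun i => (hliftA (e i) (he_memA i)).choose_spec.1
    have hubarρ : ∀ x, ρ (ubar x) = v x := by
      rintro (i | j)
      · exact (hliftA (e i) (he_memA i)).choose_spec.2
      · exact (hρ _).choose_spec
    -- Nakayama : the lifts generate `Fin n → R`
    have hU : Submodule.span R (Set.range ubar) = ⊤ := by
      set U := Submodule.span R (Set.range ubar) with hUdef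
      have hmap : Submodule.map ρ U = Submodule.span R (Set.range v) := by
        rw [hUdef, Submodule.map_span, ← Set.range_comp]
        congr 1
        exact congrArg _ (funext hubarρ)
      have hmap_top : Submodule.map ρ U = ⊤ := by
        rw [hmap]
        exact hspanRk _ hv_span
      have hsup : U ⊔ LinearMap.ker ρ = ⊤ := by
        have := congrArg (Submodule.comap ρ) hmap_top
        rwa [Submodule.comap_map_eq, Submodule.comap_top] at this
      have hker : LinearMap.ker ρ ≤
          (IsLocalRing.maximalIdeal R) • (⊤ : Submodule R (Fin n → R)) := by
        intro x hx
        have hxi : ∀ i, x i ∈ IsLocalRing.maximalIdeal R := by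
          intro i
          have : ρ x i = 0 := by rw [LinearMap.mem_ker.1 hx]; rfl
          rw [hρapp, IsLocalRing.ResidueField.algebraMap_eq] at this
          exact Ideal.Quotient.eq_zero_iff_mem.1 this
        have hxsum : x = ∑ i, Pi.single i (x i) := (Finset.univ_sum_single x).symm
        rw [hxsum]
        refine Submodule.sum_mem _ (fun i _ => ?_)
        have : Pi.single i (x i) = (x i) • (Pi.single i 1 : Fin n → R) := by
          funext j
          by_cases hji : j = i <;> simp [hji, Pi.single_apply]
        rw [this]
        exact Submodule.smul_mem_smul (hxi i) Submodule.mem_top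
      have htople : (⊤ : Submodule R (Fin n → R)) ≤
          U ⊔ (IsLocalRing.maximalIdeal R) • (⊤ : Submodule R (Fin n → R)) :=
        hsup.symm.trans_le (sup_le_sup_left hker U)
      have := Submodule.le_of_le_smul_of_le_jacobson_bot
        (Module.Finite.fg_top (R := R) (M := Fin n → R))
        (IsLocalRing.maximalIdeal_le_jacobson ⊥) htople
      exact eq_top_iff.2 this
    -- build the automorphism of `Fin n → R` sending the standard basis to the lifts
    set q : Fin n ≃ (Fin d ⊕ Fin r) := (finCongr hdr.symm).trans finSumFinEquiv.symm with hqdef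
    set u : Fin n → (Fin n → R) := ubar ∘ q with hudef
    have hu_span : Submodule.span R (Set.range u) = ⊤ := by
      rw [hudef, Set.range_comp, Equiv.range_eq_univ, Set.image_univ, hU]
    set bR := Pi.basisFun R (Fin n) with hbRdef
    set Φ := bR.constr ℕ u with hΦdef
    have hΦsurj : Surjective Φ := by
      have : LinearMap.range Φ = ⊤ := by rw [hΦdef, Module.Basis.constr_range, hu_span]
      exact LinearMap.range_eq_top.1 this
    have hΦinj : Injective Φ :=
      OrzechProperty.injective_of_surjective_endomorphism Φ hΦsurj
    set Φe : (Fin n → R) ≃ₗ[R] (Fin n → R) := LinearEquiv.ofBijective Φ ⟨hΦinj, hΦsurj⟩ with hΦedef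
    have hΦe_symm : ∀ i : Fin n, Φe.symm (u i) = bR i := by
      intro i
      apply Φe.injective
      rw [Φe.apply_symm_apply]
      have : Φe (bR i) = Φ (bR i) := rfl
      rw [this, hΦdef, Module.Basis.constr_basis]
    -- project onto the coordinates coming from the `Fin d` part
    set π : (Fin n → R) →ₗ[R] (Fin d → R) :=
      LinearMap.funLeft R R (fun j : Fin d => q.symm (Sum.inl j)) with hπdef
    set ψ : M' →ₗ[R] (Fin d → R) := π ∘ₗ (Φe.symm.toLinearMap ∘ₗ f') with hψdef
    have hψsurj : Surjective ψ := by
      have hrange : LinearMap.range ψ = ⊤ := by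
        rw [← top_le_iff, ← (Pi.basisFun R (Fin d)).span_eq, Submodule.span_le]
        rintro y ⟨j, rfl⟩
        obtain ⟨x', hx'⟩ := hubarA j
        refine ⟨x', ?_⟩
        have h1 : f' x' = u (q.symm (Sum.inl j)) := by
          rw [hudef]
          simp only [Function.comp_apply, Equiv.apply_symm_apply]
          exact hx'
        have h2 : ψ x' = π (bR (q.symm (Sum.inl j))) := by
          rw [hψdef]
          simp only [LinearMap.comp_apply, LinearEquiv.coe_coe]
          rw [h1, hΦe_symm]
        rw [h2, hπdef, hbRdef]
        funext j'
        simp only [LinearMap.funLeft_apply, Pi.basisFun_apply]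
        by_cases hjj : j' = j
        · subst hjj; simp
        · have hne : q.symm (Sum.inl j') ≠ q.symm (Sum.inl j) := by
            simp [q.symm.injective.eq_iff, hjj]
          simp [Pi.single_apply, hne, hjj]
      exact LinearMap.range_eq_top.1 hrange
    -- conclude
    have hd_mem : d ∈ {n : ℕ | ∃ N N' : Submodule R M', IsCompl N N' ∧
        Nonempty (N ≃ₗ[R] (Fin n → R))} := FrkAux.mem_iff.2 ⟨ψ, hψsurj⟩
    have hdle : d ≤ frk R M' := le_csSup FrkAux.bddAbove hd_mem
    have : n ≤ d + m := le_tsub_add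
    omega
end

section
/- Let R be a Noetherian commutative ring of finite Krull dimension d and M a finitely generated R-module. Then for each n ∈ ℕ, one has n·μ(M) − n·d ≤ μ(M^{⊕n}) ≤ n·μ(M), i.e. |μ(M^{⊕n}) − n·μ(M)| ≤ n·d. -/
namespace MuProof

open Submodule

variable {R : Type*} [CommRing R] {M : Type*} [AddCommGroup M] [Module R M]

theorem mu_le_card {s : Finset M} (h : span R (s : Set M) = ⊤) : mu R M ≤ s.card :=
  Nat.sInf_le ⟨s, rfl, h⟩

theorem mu_spec (R M : Type*) [CommRing R] [AddCommGroup M] [Module R M] [Module.Finite R M] :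
    ∃ s : Finset M, s.card = mu R M ∧ span R (s : Set M) = ⊤ := by
  have h : {n : ℕ | ∃ s : Finset M, s.card = n ∧ span R (s : Set M) = ⊤}.Nonempty := by
    obtain ⟨s, hs⟩ := Module.Finite.fg_top (R := R) (M := M)
    exact ⟨s.card, s, rfl, hs⟩
  obtain ⟨s, hs1, hs2⟩ := Nat.sInf_mem h
  exact ⟨s, hs1, hs2⟩

theorem mu_eq_zero [Subsingleton M] : mu R M = 0 := by
  have h : span R ((∅ : Finset M) : Set M) = ⊤ := by
    rw [eq_top_iff]
    intro x _
    rw [Subsingleton.elim x 0]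
    exact zero_mem _
  simpa using mu_le_card h

section locgen

variable (R M)

/-- "`M` localized at `P` is generated by at most `t` elements", phrased without localizations. -/
def LocGen (P : Ideal R) (t : ℕ) : Prop :=
  ∃ (s : Finset M) (a : R), a ∉ P ∧ s.card ≤ t ∧ ∀ x : M, a • x ∈ span R (s : Set M)

/-- The minimal local number of generators at `P`. -/
noncomputable def rloc (P : Ideal R) : ℕ := sInf {t | LocGen R M P t}

/-- `v` is a basic element at `P`. -/
def IsBasic (P : Ideal R) (v : M) : Prop :=
  ¬ ∃ a : R, a ∉ P ∧ a • v ∈ (P • ⊤ : Submodule R M)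

variable {R M}

theorem LocGen.mono {P : Ideal R} {t t' : ℕ} (h : LocGen R M P t) (htt : t ≤ t') :
    LocGen R M P t' := by
  obtain ⟨s, a, h1, h2, h3⟩ := h
  exact ⟨s, a, h1, h2.trans htt, h3⟩

theorem LocGen.of_le {P P' : Ideal R} {t : ℕ} (h : LocGen R M P' t) (hle : P ≤ P') :
    LocGen R M P t := by
  obtain ⟨s, a, h1, h2, h3⟩ := h
  exact ⟨s, a, fun hc => h1 (hle hc), h2, h3⟩

theorem locGen_mu [Module.Finite R M] {P : Ideal R} (hP : P ≠ ⊤) : LocGen R M P (mu R M) := by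
  obtain ⟨s, hcard, hspan⟩ := mu_spec R M
  exact ⟨s, 1, (Ideal.ne_top_iff_one P).mp hP, le_of_eq hcard, fun x => by rw [hspan]; trivial⟩

theorem rloc_le {P : Ideal R} {t : ℕ} (h : LocGen R M P t) : rloc R M P ≤ t := Nat.sInf_le h

theorem locGen_rloc [Module.Finite R M] {P : Ideal R} (hP : P ≠ ⊤) :
    LocGen R M P (rloc R M P) :=
  Nat.sInf_mem (⟨mu R M, locGen_mu hP⟩ : {t | LocGen R M P t}.Nonempty)

theorem rloc_le_mu [Module.Finite R M] {P : Ideal R} (hP : P ≠ ⊤) : rloc R M P ≤ mu R M :=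
  rloc_le (locGen_mu hP)

theorem rloc_mono [Module.Finite R M] {P P' : Ideal R} (h : P ≤ P') (hP' : P' ≠ ⊤) :
    rloc R M P ≤ rloc R M P' :=
  rloc_le ((locGen_rloc hP').of_le h)

theorem one_le_rloc [Module.Finite R M] {P : Ideal R} (hP : P.IsPrime)
    (hann : Module.annihilator R M ≤ P) : 1 ≤ rloc R M P := by
  by_contra hc
  push_neg at hc
  have h0 : rloc R M P = 0 := by omega
  have h1 := locGen_rloc (M := M) hP.ne_top
  rw [h0] at h1
  obtain ⟨s, a, haP, hcard, hgen⟩ := h1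
  have hs : s = ∅ := Finset.card_eq_zero.mp (Nat.le_zero.mp hcard)
  subst hs
  apply haP
  apply hann
  rw [Module.mem_annihilator]
  intro m
  simpa using hgen m

theorem LocGen.quotient {P : Ideal R} {t : ℕ} (h : LocGen R M P t) (N : Submodule R M) :
    LocGen R (M ⧸ N) P t := by
  classical
  obtain ⟨s, a, haP, hcard, hgen⟩ := h
  refine ⟨s.image N.mkQ, a, haP, (Finset.card_image_le).trans hcard, fun x => ?_⟩
  obtain ⟨y, rfl⟩ := N.mkQ_surjective x
  rw [← map_smul, Finset.coe_image, ← Submodule.map_span]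
  exact Submodule.mem_map_of_mem (hgen y)

theorem LocGen.drop {P : Ideal R} {t : ℕ} (h : LocGen R M P t) (hP : P.IsPrime) {v : M}
    (hv : IsBasic R M P v) : 1 ≤ t ∧ LocGen R (M ⧸ span R {v}) P (t - 1) := by
  classical
  obtain ⟨s, a, haP, hcard, hgen⟩ := h
  obtain ⟨f, -, hf⟩ := mem_span_finset.mp (hgen v)
  by_cases hall : ∀ x ∈ s, f x ∈ P
  · exact absurd ⟨a, haP, hf ▸ Submodule.sum_mem _ fun x hx =>
      Submodule.smul_mem_smul (hall x hx) Submodule.mem_top⟩ hv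
  push_neg at hall
  obtain ⟨x₀, hx₀s, hfx₀⟩ := hall
  set T : Submodule R M := span R (insert v ((s.erase x₀ : Finset M) : Set M)) with hT
  have hvT : v ∈ T := subset_span (Set.mem_insert _ _)
  have heraseT : ∀ y ∈ s.erase x₀, y ∈ T := fun y hy =>
    subset_span (Set.mem_insert_of_mem _ (by exact_mod_cast hy))
  have hx₀T : f x₀ • x₀ ∈ T := by
    have hsum : f x₀ • x₀ = a • v - ∑ x ∈ s.erase x₀, f x • x := by
      rw [eq_sub_iff_add_eq, ← hf]
      exact Finset.add_sum_erase s (fun x => f x • x) hx₀s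
    rw [hsum]
    exact sub_mem (Submodule.smul_mem _ _ hvT)
      (Submodule.sum_mem _ fun x hx => Submodule.smul_mem _ _ (heraseT x hx))
  have hsT : ∀ y ∈ s, f x₀ • y ∈ T := by
    intro y hy
    by_cases hyx : y = x₀
    · subst hyx; exact hx₀T
    · exact Submodule.smul_mem _ _ (heraseT y (Finset.mem_erase.mpr ⟨hyx, hy⟩))
  have key : ∀ x : M, (a * f x₀) • x ∈ T := by
    intro x
    have hle : span R (s : Set M) ≤ T.comap (LinearMap.lsmul R M (f x₀)) :=
      span_le.mpr fun y hy => hsT y hy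
    have h2 := hle (hgen x)
    simp only [Submodule.mem_comap, LinearMap.lsmul_apply] at h2
    rwa [mul_comm a (f x₀), mul_smul]
  constructor
  · have : 0 < s.card := Finset.card_pos.mpr ⟨x₀, hx₀s⟩
    omega
  refine ⟨(s.erase x₀).image (span R {v}).mkQ, a * f x₀, ?_, ?_, ?_⟩
  · intro hc
    rcases hP.mem_or_mem hc with h1 | h1
    exacts [haP h1, hfx₀ h1]
  · refine (Finset.card_image_le).trans ?_
    rw [Finset.card_erase_of_mem hx₀s]
    omega
  · intro x
    obtain ⟨y, rfl⟩ := (span R {v}).mkQ_surjective x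
    rw [← map_smul, Finset.coe_image]
    have h3 : (span R {v}).mkQ ((a * f x₀) • y) ∈ Submodule.map (span R {v}).mkQ T :=
      Submodule.mem_map_of_mem (key y)
    rw [hT, Submodule.map_span, Set.image_insert_eq] at h3
    have hv0 : (span R {v}).mkQ v = 0 :=
      (Submodule.Quotient.mk_eq_zero _).mpr (Submodule.mem_span_singleton_self v)
    rwa [hv0, Submodule.span_insert_zero] at h3

theorem exists_isBasic_single [Module.Finite R M] {P : Ideal R} (hP : P.IsPrime)
    (hann : Module.annihilator R M ≤ P) : ∃ v : M, IsBasic R M P v := by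
  classical
  by_contra hc
  push_neg at hc
  simp only [IsBasic, not_not] at hc
  choose g hg1 hg2 using hc
  obtain ⟨s, hs⟩ := Module.Finite.fg_top (R := R) (M := M)
  set a : R := ∏ x ∈ s, g x with ha
  have haP : a ∉ P := by
    intro hmem
    obtain ⟨x, hxs, hx⟩ := (Ideal.IsPrime.prod_mem_iff (hp := hP)).mp hmem
    exact hg1 x hx
  have hrange : LinearMap.range (algebraMap R (Module.End R M) a) ≤
      P • (⊤ : Submodule R M) := by
    rintro y ⟨x, rfl⟩
    rw [Module.algebraMap_end_apply]
    have hx : x ∈ span R (s : Set M) := by rw [hs]; trivial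
    have hle : span R (s : Set M) ≤
        (P • (⊤ : Submodule R M)).comap (LinearMap.lsmul R M a) := by
      refine span_le.mpr fun y hy => ?_
      rw [SetLike.mem_coe, Submodule.mem_comap, LinearMap.lsmul_apply]
      have hay : a = (∏ x ∈ s.erase y, g x) * g y := by
        rw [ha, Finset.prod_erase_mul s g hy]
      rw [hay, mul_smul]
      exact Submodule.smul_mem _ _ (hg2 y)
    have h6 := Submodule.mem_comap.mp (hle hx)
    rwa [LinearMap.lsmul_apply] at h6
  obtain ⟨p, hmonic, -, hcoeff, heval⟩ :=
    LinearMap.exists_monic_and_coeff_mem_pow_and_aeval_eq_zero_of_range_le_smul R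
      (algebraMap R (Module.End R M) a) P hrange
  rw [Polynomial.aeval_algebraMap_apply] at heval
  have hann' : Polynomial.aeval a p ∈ Module.annihilator R M := by
    rw [Module.mem_annihilator]
    intro m
    have h0 : (algebraMap R (Module.End R M) (Polynomial.aeval a p)) m = 0 := by
      rw [heval]; rfl
    rwa [Module.algebraMap_end_apply] at h0
  have hPmem : Polynomial.aeval a p ∈ P := hann hann'
  have haev : Polynomial.aeval a p = Polynomial.eval a p := by
    simp [Polynomial.aeval_def]
  rw [haev, Polynomial.eval_eq_sum_range, Finset.sum_range_succ, hmonic.coeff_natDegree,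
    one_mul] at hPmem
  have hsum : ∑ i ∈ Finset.range p.natDegree, p.coeff i * a ^ i ∈ P :=
    Submodule.sum_mem _ fun i hi => P.mul_mem_right _
      (Ideal.pow_le_self (by have := Finset.mem_range.mp hi; omega) (hcoeff i))
  have hpow : a ^ p.natDegree ∈ P := by
    have h5 := Ideal.sub_mem P hPmem hsum
    simpa using h5
  exact haP (hP.mem_of_pow_mem _ hpow)

theorem exists_isBasic [Module.Finite R M] (F : Finset (Ideal R))
    (hF : ∀ P ∈ F, P.IsPrime ∧ Module.annihilator R M ≤ P) :
    ∃ v : M, ∀ P ∈ F, IsBasic R M P v := by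
  classical
  induction F using Finset.strongInduction with
  | _ F ih =>
    rcases F.eq_empty_or_nonempty with rfl | hne
    · exact ⟨0, by simp⟩
    obtain ⟨P₀, hP₀F, hmin⟩ := F.exists_minimal hne
    obtain ⟨hP₀p, hP₀a⟩ := hF P₀ hP₀F
    obtain ⟨v, hv⟩ := ih (F.erase P₀) (Finset.erase_ssubset hP₀F)
      (fun P hP => hF P (Finset.erase_subset _ _ hP))
    by_cases hbas : IsBasic R M P₀ v
    · refine ⟨v, fun P hP => ?_⟩
      rcases eq_or_ne P P₀ with rfl | hne'
      · exact hbas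
      · exact hv P (Finset.mem_erase.mpr ⟨hne', hP⟩)
    · obtain ⟨v₀, hv₀⟩ := exists_isBasic_single hP₀p hP₀a
      rw [IsBasic, not_not] at hbas
      obtain ⟨s₀, hs₀P, hs₀v⟩ := hbas
      have hinf : ¬ (F.erase P₀).inf id ≤ P₀ := by
        intro hle
        obtain ⟨Q, hQ, hQle⟩ := (Ideal.IsPrime.inf_le' hP₀p).mp hle
        have hQne : Q ≠ P₀ := (Finset.mem_erase.mp hQ).1
        exact hQne (le_antisymm hQle (hmin (Finset.mem_of_mem_erase hQ) hQle))
      obtain ⟨a, haQ, haP₀⟩ := SetLike.not_le_iff_exists.mp hinf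
      refine ⟨v + a • v₀, fun P hP => ?_⟩
      rcases eq_or_ne P P₀ with rfl | hne'
      · rintro ⟨b, hb, hmem⟩
        apply hv₀
        refine ⟨s₀ * (b * a), fun hc => ?_, ?_⟩
        · rcases hP₀p.mem_or_mem hc with h1 | h1
          · exact hs₀P h1
          · rcases hP₀p.mem_or_mem h1 with h2 | h2
            exacts [hb h2, haP₀ h2]
        · have h1 : (s₀ * b) • v + (s₀ * (b * a)) • v₀ ∈ P • (⊤ : Submodule R M) := by
            have h0 := Submodule.smul_mem _ s₀ hmem
            have heq : s₀ • b • (v + a • v₀) = (s₀ * b) • v + (s₀ * (b * a)) • v₀ := by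
              rw [smul_smul, smul_add, smul_smul, mul_assoc]
            rwa [heq] at h0
          have h2 : (s₀ * b) • v ∈ P • (⊤ : Submodule R M) := by
            have h0 := Submodule.smul_mem _ b hs₀v
            rwa [smul_smul, mul_comm b s₀] at h0
          have h3 := Submodule.sub_mem _ h1 h2
          simpa using h3
      · have hPe : P ∈ F.erase P₀ := Finset.mem_erase.mpr ⟨hne', hP⟩
        rintro ⟨b, hb, hmem⟩
        have haP : a ∈ P := (Finset.inf_le hPe : (F.erase P₀).inf id ≤ P) haQ
        have h1 : (b * a) • v₀ ∈ P • (⊤ : Submodule R M) :=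
          Submodule.smul_mem_smul (P.mul_mem_left b haP) Submodule.mem_top
        apply hv P hPe
        refine ⟨b, hb, ?_⟩
        have h2 := Submodule.sub_mem _ hmem h1
        have heq : b • (v + a • v₀) - (b * a) • v₀ = b • v := by
          rw [smul_add, smul_smul]; abel
        rwa [heq] at h2

theorem annihilator_le_quotient (N : Submodule R M) :
    Module.annihilator R M ≤ Module.annihilator R (M ⧸ N) := by
  intro a ha
  rw [Module.mem_annihilator] at ha ⊢
  intro m
  obtain ⟨y, rfl⟩ := N.mkQ_surjective m
  rw [← map_smul, ha, map_zero]

variable (R M) in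
/-- The ideal cutting out the locus where `M` needs more than `k` local generators. -/
noncomputable def genIdeal (k : ℕ) : Ideal R :=
  ⨆ s : {s : Finset M // s.card ≤ k},
    Module.annihilator R (M ⧸ span R ((s : Finset M) : Set M))

theorem annihilator_le_genIdeal (k : ℕ) : Module.annihilator R M ≤ genIdeal R M k :=
  le_trans (annihilator_le_quotient _)
    (le_iSup (fun s : {s : Finset M // s.card ≤ k} =>
      Module.annihilator R (M ⧸ span R ((s : Finset M) : Set M))) ⟨∅, by simp⟩)

theorem not_locGen_iff {P : Ideal R} (hP : P.IsPrime) {k : ℕ} :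
    ¬ LocGen R M P k ↔ genIdeal R M k ≤ P := by
  constructor
  · intro h
    refine iSup_le ?_
    rintro ⟨s, hs⟩
    by_contra hc
    obtain ⟨a, haI, haP⟩ := SetLike.not_le_iff_exists.mp hc
    refine h ⟨s, a, haP, hs, fun x => ?_⟩
    have h1 := Module.mem_annihilator.mp haI ((span R ((s : Finset M) : Set M)).mkQ x)
    rw [← map_smul] at h1
    exact (Submodule.Quotient.mk_eq_zero _).mp h1
  · rintro hle ⟨s, a, haP, hcard, hgen⟩
    apply haP
    apply hle
    refine le_iSup (fun s : {s : Finset M // s.card ≤ k} =>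
      Module.annihilator R (M ⧸ span R ((s : Finset M) : Set M))) ⟨s, hcard⟩ ?_
    rw [Module.mem_annihilator]
    intro m
    obtain ⟨y, rfl⟩ := Submodule.mkQ_surjective _ m
    rw [← map_smul]
    exact (Submodule.Quotient.mk_eq_zero _).mpr (hgen y)

end locgen

section delta

variable (R) in
/-- The (truncated) coheight of a prime. -/
noncomputable def delta (P : PrimeSpectrum R) : ℕ := (Order.coheight P).toNat

theorem coheight_le {d : ℕ} (hd : ringKrullDim R = d) (P : PrimeSpectrum R) :
    Order.coheight P ≤ (d : ℕ∞) := by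
  have h := Order.coheight_le_krullDim P
  rw [show Order.krullDim (PrimeSpectrum R) = ringKrullDim R from rfl, hd] at h
  exact_mod_cast h

theorem delta_le {d : ℕ} (hd : ringKrullDim R = d) (P : PrimeSpectrum R) : delta R P ≤ d := by
  have h := ENat.toNat_le_toNat (coheight_le hd P) (by simp)
  have h2 : (Order.coheight P).toNat ≤ d := by simpa using h
  exact h2

theorem delta_lt {d : ℕ} (hd : ringKrullDim R = d) {P Q : PrimeSpectrum R} (h : P < Q) :
    delta R Q < delta R P := by
  have hQd := coheight_le hd Q
  have hPd := coheight_le hd P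
  have hQtop : Order.coheight Q < ⊤ := lt_of_le_of_lt hQd (ENat.coe_lt_top d)
  have h1 : Order.coheight Q < Order.coheight P := Order.coheight_strictAnti h hQtop
  have hPne : Order.coheight P ≠ ⊤ := by
    intro hc
    rw [hc, top_le_iff] at hPd
    exact absurd hPd (by simp)
  have hQne : Order.coheight Q ≠ ⊤ := hQtop.ne
  rw [← ENat.coe_toNat hPne, ← ENat.coe_toNat hQne] at h1
  exact_mod_cast h1

end delta

theorem minimalPrimes_finite [IsNoetherianRing R] (J : Ideal R) : J.minimalPrimes.Finite := by
  rw [Ideal.minimalPrimes_eq_comap]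
  exact (minimalPrimes.finite_of_isNoetherianRing _).image _

theorem mu_le_quotient_succ [Module.Finite R M] (v : M) :
    mu R M ≤ mu R (M ⧸ span R {v}) + 1 := by
  classical
  haveI : Module.Finite R (M ⧸ span R {v}) :=
    Module.Finite.of_surjective _ ((span R {v}).mkQ_surjective)
  obtain ⟨sbar, hcard, hspan⟩ := mu_spec R (M ⧸ span R {v})
  choose g hg using fun y : M ⧸ span R {v} => (span R {v}).mkQ_surjective y
  set s : Finset M := insert v (sbar.image g) with hs
  have hsp : span R (s : Set M) = ⊤ := by
    rw [eq_top_iff]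
    intro x _
    have hx : (span R {v}).mkQ x ∈ span R (sbar : Set (M ⧸ span R {v})) := by
      rw [hspan]; trivial
    have himg : (sbar : Set (M ⧸ span R {v})) ⊆
        (span R {v}).mkQ '' (((sbar.image g) : Finset M) : Set M) := by
      intro y hy
      exact ⟨g y, by simpa using Finset.mem_image_of_mem g hy, hg y⟩
    have hx2 := (Submodule.span_mono himg) hx
    rw [← Submodule.map_span] at hx2
    obtain ⟨w, hw, hwx⟩ := hx2
    have hxw : x - w ∈ span R ({v} : Set M) := by
      have := (Submodule.Quotient.eq (span R {v})).mp hwx.symm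
      simpa using this
    have h1 : w ∈ span R (s : Set M) := by
      refine (Submodule.span_mono ?_) hw
      rw [hs, Finset.coe_insert]
      exact Set.subset_insert _ _
    have h2 : x - w ∈ span R (s : Set M) := by
      refine (Submodule.span_mono ?_) hxw
      rw [hs, Finset.coe_insert]
      exact Set.singleton_subset_iff.mpr (Set.mem_insert _ _)
    have h3 := add_mem h2 h1
    simpa using h3
  calc mu R M ≤ s.card := mu_le_card hsp
  _ ≤ (sbar.image g).card + 1 := Finset.card_insert_le _ _
  _ ≤ sbar.card + 1 := by have := Finset.card_image_le (s := sbar) (f := g); omega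
  _ = mu R (M ⧸ span R {v}) + 1 := by rw [hcard]

end MuProof

universe uR uM

namespace MuProof

open Submodule

/-- Forster's theorem: `μ(M) ≤ max_P (μ_P(M_P) + coheight P)`, in the form needed here. -/
theorem forster {R : Type uR} [CommRing R] [IsNoetherianRing R] {d : ℕ}
    (hd : ringKrullDim R = d) :
    ∀ (b : ℕ) (M : Type uM) [AddCommGroup M] [Module R M] [Module.Finite R M],
      (∀ P : PrimeSpectrum R, Module.annihilator R M ≤ P.asIdeal →
        rloc R M P.asIdeal + delta R P ≤ b) → mu R M ≤ b := by
  intro b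
  induction b with
  | zero =>
    intro M _ _ _ hB
    by_cases hM : Subsingleton M
    · simp [mu_eq_zero]
    exfalso
    haveI : Nontrivial M := not_subsingleton_iff_nontrivial.mp hM
    have hann : Module.annihilator R M ≠ ⊤ := by
      intro hc
      obtain ⟨m, hm⟩ := exists_ne (0 : M)
      have h1 : (1 : R) ∈ Module.annihilator R M := by rw [hc]; trivial
      rw [Module.mem_annihilator] at h1
      exact hm (by simpa using h1 m)
    obtain ⟨P, hPmax, hPle⟩ := Ideal.exists_le_maximal _ hann
    have hB' : rloc R M P + delta R ⟨P, hPmax.isPrime⟩ ≤ 0 := hB ⟨P, hPmax.isPrime⟩ hPle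
    have h1 := one_le_rloc (M := M) hPmax.isPrime hPle
    omega
  | succ b ih =>
    intro M _ _ _ hB
    classical
    by_cases hM : Subsingleton M
    · simp [mu_eq_zero]
    haveI : Nontrivial M := not_subsingleton_iff_nontrivial.mp hM
    set F₀ : Set (PrimeSpectrum R) := {P | Module.annihilator R M ≤ P.asIdeal ∧
      rloc R M P.asIdeal + delta R P = b + 1} with hF₀
    have hfin : F₀.Finite := by
      have hsub : F₀ ⊆ ⋃ k ∈ Finset.range (mu R M + 1),
          PrimeSpectrum.asIdeal ⁻¹' (genIdeal R M k).minimalPrimes := by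
        rintro P ⟨hPann, hPeq⟩
        have hPprime : P.asIdeal.IsPrime := P.2
        have hk1 : 1 ≤ rloc R M P.asIdeal := one_le_rloc hPprime hPann
        have hkmu : rloc R M P.asIdeal ≤ mu R M := rloc_le_mu hPprime.ne_top
        refine Set.mem_biUnion
          (show rloc R M P.asIdeal - 1 ∈ Finset.range (mu R M + 1) from
            Finset.mem_range.mpr (by omega)) ?_
        refine ⟨⟨hPprime, ?_⟩, ?_⟩
        · refine (not_locGen_iff hPprime).mp ?_
          intro hlg
          have := rloc_le hlg
          omega
        · rintro Q ⟨hQprime, hJQ⟩ hQle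
          by_contra hQP
          have hQlt : Q < P.asIdeal := lt_of_le_of_ne hQle (by
            intro hc; subst hc; exact hQP le_rfl)
          have hQr : rloc R M P.asIdeal ≤ rloc R M Q := by
            by_contra hr
            push_neg at hr
            have hlg : LocGen R M Q (rloc R M P.asIdeal - 1) :=
              (locGen_rloc hQprime.ne_top).mono (by omega)
            exact absurd hlg ((not_locGen_iff hQprime).mpr hJQ)
          have hQann : Module.annihilator R M ≤ Q :=
            le_trans (annihilator_le_genIdeal _) hJQ
          have hBQ : rloc R M Q + delta R ⟨Q, hQprime⟩ ≤ b + 1 := hB ⟨Q, hQprime⟩ hQann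
          have hdlt : delta R P < delta R (⟨Q, hQprime⟩ : PrimeSpectrum R) :=
            delta_lt hd (show (⟨Q, hQprime⟩ : PrimeSpectrum R) < P from hQlt)
          omega
      refine Set.Finite.subset (Set.Finite.biUnion (Finset.range (mu R M + 1)).finite_toSet
        (fun k _ => Set.Finite.preimage ?_ (minimalPrimes_finite _))) hsub
      exact Set.injOn_of_injective (fun a b h => PrimeSpectrum.ext h)
    set F : Finset (Ideal R) := hfin.toFinset.image PrimeSpectrum.asIdeal with hF
    have hFspec : ∀ P ∈ F, P.IsPrime ∧ Module.annihilator R M ≤ P := by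
      intro P hP
      obtain ⟨Q, hQ, rfl⟩ := Finset.mem_image.mp hP
      rw [Set.Finite.mem_toFinset] at hQ
      exact ⟨Q.2, hQ.1⟩
    obtain ⟨v, hv⟩ := exists_isBasic F hFspec
    haveI : Module.Finite R (M ⧸ span R {v}) :=
      Module.Finite.of_surjective _ ((span R {v}).mkQ_surjective)
    have hM' : mu R (M ⧸ span R {v}) ≤ b := by
      apply ih
      intro P hPann'
      have hPann : Module.annihilator R M ≤ P.asIdeal :=
        le_trans (annihilator_le_quotient _) hPann'
      by_cases hcase : rloc R M P.asIdeal + delta R P = b + 1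
      · have hPF : P.asIdeal ∈ F := by
          rw [hF]
          exact Finset.mem_image_of_mem _ (hfin.mem_toFinset.mpr ⟨hPann, hcase⟩)
        obtain ⟨h1, h2⟩ := (locGen_rloc (R := R) (M := M) P.2.ne_top).drop P.2 (hv _ hPF)
        have h3 := rloc_le h2
        omega
      · have hle := hB P hPann
        have h4 : rloc R (M ⧸ span R {v}) P.asIdeal ≤ rloc R M P.asIdeal :=
          rloc_le ((locGen_rloc (R := R) (M := M) P.2.ne_top).quotient _)
        omega
    have h5 := mu_le_quotient_succ (R := R) (M := M) v
    omega

section residue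

variable {R : Type uR} [CommRing R] {M : Type uM} [AddCommGroup M] [Module R M]

attribute [local instance] Ideal.Quotient.field

theorem smul_quot (P : Ideal R) (r : R) (x : M ⧸ (P • ⊤ : Submodule R M)) :
    (Ideal.Quotient.mk P r) • x = r • x := by
  obtain ⟨m, rfl⟩ := Submodule.Quotient.mk_surjective _ x
  rw [Module.Quotient.mk_smul_mk, Submodule.Quotient.mk_smul]

theorem mem_spanK_of_mem_spanR {P : Ideal R} {S : Set (M ⧸ (P • ⊤ : Submodule R M))}
    {x : M ⧸ (P • ⊤ : Submodule R M)} (h : x ∈ span R S) : x ∈ span (R ⧸ P) S := by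
  induction h using Submodule.span_induction with
  | mem x hx => exact subset_span hx
  | zero => exact zero_mem _
  | add _ _ _ _ h1 h2 => exact add_mem h1 h2
  | smul r x _ hx => rw [← smul_quot]; exact Submodule.smul_mem _ _ hx

theorem mem_spanR_of_mem_spanK {P : Ideal R} {S : Set (M ⧸ (P • ⊤ : Submodule R M))}
    {x : M ⧸ (P • ⊤ : Submodule R M)} (h : x ∈ span (R ⧸ P) S) : x ∈ span R S := by
  induction h using Submodule.span_induction with
  | mem x hx => exact subset_span hx
  | zero => exact zero_mem _
  | add _ _ _ _ h1 h2 => exact add_mem h1 h2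
  | smul c x _ hx =>
    obtain ⟨r, rfl⟩ := Ideal.Quotient.mk_surjective c
    rw [smul_quot]
    exact Submodule.smul_mem _ _ hx

theorem span_quot_top_iff {P : Ideal R} (S : Set (M ⧸ (P • ⊤ : Submodule R M))) :
    span R S = ⊤ ↔ span (R ⧸ P) S = ⊤ := by
  constructor
  · intro h
    rw [eq_top_iff]
    intro x _
    exact mem_spanK_of_mem_spanR (by rw [h]; trivial)
  · intro h
    rw [eq_top_iff]
    intro x _
    exact mem_spanR_of_mem_spanK (by rw [h]; trivial)

theorem finite_quot [Module.Finite R M] (P : Ideal R) :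
    Module.Finite (R ⧸ P) (M ⧸ (P • ⊤ : Submodule R M)) := by
  haveI : Module.Finite R (M ⧸ (P • ⊤ : Submodule R M)) :=
    Module.Finite.of_surjective _ (Submodule.mkQ_surjective _)
  obtain ⟨s, hs⟩ := Module.Finite.fg_top (R := R) (M := M ⧸ (P • ⊤ : Submodule R M))
  exact ⟨⟨s, (span_quot_top_iff (s : Set (M ⧸ (P • ⊤ : Submodule R M)))).mp hs⟩⟩

theorem finrank_le_of_locGen {P : Ideal R} [P.IsMaximal] [Module.Finite R M] {t : ℕ}
    (h : LocGen R M P t) :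
    Module.finrank (R ⧸ P) (M ⧸ (P • ⊤ : Submodule R M)) ≤ t := by
  classical
  obtain ⟨s, a, haP, hcard, hgen⟩ := h
  set V := M ⧸ (P • ⊤ : Submodule R M) with hV
  set s' : Finset V := s.image (P • ⊤ : Submodule R M).mkQ with hs'
  have habar : (Ideal.Quotient.mk P a) ≠ 0 := fun hc =>
    haP (Ideal.Quotient.eq_zero_iff_mem.mp hc)
  have hspan : span (R ⧸ P) (s' : Set V) = ⊤ := by
    rw [eq_top_iff]
    rintro x -
    obtain ⟨m, rfl⟩ := Submodule.Quotient.mk_surjective _ x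
    have h1 : (P • ⊤ : Submodule R M).mkQ (a • m) ∈ span R (s' : Set V) := by
      rw [hs', Finset.coe_image, ← Submodule.map_span]
      exact Submodule.mem_map_of_mem (hgen m)
    have h2 : (P • ⊤ : Submodule R M).mkQ (a • m) ∈ span (R ⧸ P) (s' : Set V) :=
      mem_spanK_of_mem_spanR h1
    have h3 : (Ideal.Quotient.mk P a) • (Submodule.Quotient.mk m : V) ∈
        span (R ⧸ P) (s' : Set V) := by
      rw [smul_quot]
      simpa using h2
    have h4 := Submodule.smul_mem _ ((Ideal.Quotient.mk P a)⁻¹) h3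
    rwa [inv_smul_smul₀ habar] at h4
  have hfr : Module.finrank (R ⧸ P) V ≤ s'.card := by
    have hrange : Set.range (fun y : {x // x ∈ s'} => (y : V)) = (s' : Set V) :=
      Subtype.range_coe
    have := finrank_le_of_span_eq_top (v := fun y : {x // x ∈ s'} => (y : V))
      (by rw [hrange, hspan])
    simpa [Fintype.card_coe] using this
  exact hfr.trans ((Finset.card_image_le).trans hcard)

theorem locGen_finrank {P : Ideal R} [P.IsMaximal] [Module.Finite R M] :
    LocGen R M P (Module.finrank (R ⧸ P) (M ⧸ (P • ⊤ : Submodule R M))) := by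
  classical
  set K := R ⧸ P with hK
  set V := M ⧸ (P • ⊤ : Submodule R M) with hV
  haveI : Module.Finite K V := finite_quot P
  let bV : Module.Basis (Fin (Module.finrank K V)) K V := Module.finBasis K V
  choose x hx using fun i => Submodule.Quotient.mk_surjective (P • ⊤ : Submodule R M) (bV i)
  have hNtop : span R (Set.range x) ⊔ (P • ⊤ : Submodule R M) = ⊤ := by
    rw [eq_top_iff]
    rintro m -
    have h1 : (Submodule.Quotient.mk m : V) ∈ span K (Set.range ⇑bV) := by
      rw [bV.span_eq]; trivial
    have h2 : (Submodule.Quotient.mk m : V) ∈ span R (Set.range ⇑bV) :=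
      mem_spanR_of_mem_spanK h1
    have himg : Set.range ⇑bV = (P • ⊤ : Submodule R M).mkQ '' (Set.range x) := by
      have hcomp : ⇑(P • ⊤ : Submodule R M).mkQ ∘ x = ⇑bV := funext fun i => hx i
      rw [← Set.range_comp, hcomp]
    rw [himg, ← Submodule.map_span] at h2
    obtain ⟨w, hw, hwm⟩ := h2
    have hmw : m - w ∈ (P • ⊤ : Submodule R M) := by
      have := (Submodule.Quotient.eq (P • ⊤ : Submodule R M)).mp hwm.symm
      simpa using this
    refine Submodule.mem_sup.mpr ⟨w, hw, m - w, hmw, by abel⟩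
  haveI : Module.Finite R (M ⧸ span R (Set.range x)) :=
    Module.Finite.of_surjective _ (Submodule.mkQ_surjective _)
  have htop : (⊤ : Submodule R (M ⧸ span R (Set.range x))) ≤
      P • (⊤ : Submodule R (M ⧸ span R (Set.range x))) := by
    have h1 : Submodule.map (span R (Set.range x)).mkQ
        (span R (Set.range x) ⊔ (P • ⊤ : Submodule R M)) = ⊤ := by
      rw [hNtop, Submodule.map_top, Submodule.range_mkQ]
    rw [Submodule.map_sup, Submodule.map_smul''] at h1
    have h2 : Submodule.map (span R (Set.range x)).mkQ (span R (Set.range x)) = ⊥ := by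
      rw [eq_bot_iff]
      rintro y ⟨z, hz, rfl⟩
      simpa using (Submodule.Quotient.mk_eq_zero (span R (Set.range x))).mpr hz
    rw [h2, bot_sup_eq, Submodule.map_top, Submodule.range_mkQ] at h1
    exact le_of_eq h1.symm
  obtain ⟨r, hr1, hr0⟩ :=
    Submodule.exists_sub_one_mem_and_smul_eq_zero_of_fg_of_le_smul P ⊤
      Module.Finite.fg_top htop
  refine ⟨Finset.univ.image x, r, ?_, ?_, ?_⟩
  · intro hc
    have h1 : (1 : R) ∈ P := by
      have := Ideal.sub_mem P hc hr1
      simpa using this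
    exact (Ideal.ne_top_iff_one P).mp (Ideal.IsMaximal.ne_top inferInstance) h1
  · calc (Finset.univ.image x).card ≤ (Finset.univ : Finset (Fin (Module.finrank K V))).card :=
        Finset.card_image_le
      _ = Module.finrank K V := by simp
  · intro m
    have h0 := hr0 ((span R (Set.range x)).mkQ m) Submodule.mem_top
    rw [← map_smul] at h0
    have h1 : r • m ∈ span R (Set.range x) :=
      (Submodule.Quotient.mk_eq_zero (span R (Set.range x))).mp h0
    have heq : Set.range x = ((Finset.univ.image x : Finset M) : Set M) := by
      rw [Finset.coe_image, Finset.coe_univ, Set.image_univ]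
    rwa [heq] at h1

theorem finrank_pi_quot_ge {P : Ideal R} [P.IsMaximal] (n : ℕ) [Module.Finite R M] :
    n * Module.finrank (R ⧸ P) (M ⧸ (P • ⊤ : Submodule R M)) ≤
      Module.finrank (R ⧸ P) ((Fin n → M) ⧸ (P • ⊤ : Submodule R (Fin n → M))) := by
  classical
  set K := R ⧸ P with hK
  set V := M ⧸ (P • ⊤ : Submodule R M) with hV
  set W := (Fin n → M) ⧸ (P • ⊤ : Submodule R (Fin n → M)) with hW
  haveI : Module.Finite K V := finite_quot P
  haveI : Module.Finite K W := finite_quot P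
  let φ : (Fin n → M) →ₗ[R] (Fin n → V) :=
    LinearMap.pi (fun i => (P • ⊤ : Submodule R M).mkQ.comp (LinearMap.proj i))
  have hker : (P • ⊤ : Submodule R (Fin n → M)) ≤ LinearMap.ker φ := by
    refine Submodule.smul_le.mpr fun r hr m _ => ?_
    rw [LinearMap.mem_ker]
    funext i
    show (P • ⊤ : Submodule R M).mkQ ((r • m) i) = 0
    exact (Submodule.Quotient.mk_eq_zero _).mpr
      (Submodule.smul_mem_smul hr Submodule.mem_top)
  let ψ : W →ₗ[R] (Fin n → V) := Submodule.liftQ _ φ hker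
  have hψ : ∀ m : Fin n → M, ψ (Submodule.Quotient.mk m) = φ m := fun m =>
    Submodule.liftQ_apply _ φ m
  have hψsurj : Function.Surjective ψ := by
    intro y
    choose m hm using fun i => Submodule.Quotient.mk_surjective (P • ⊤ : Submodule R M) (y i)
    refine ⟨Submodule.Quotient.mk m, ?_⟩
    rw [hψ]
    funext i
    exact hm i
  let g : W →ₗ[K] (Fin n → V) :=
    { toFun := ψ
      map_add' := ψ.map_add
      map_smul' := by
        intro c w
        obtain ⟨r, rfl⟩ := Ideal.Quotient.mk_surjective c
        obtain ⟨m, rfl⟩ := Submodule.Quotient.mk_surjective _ w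
        simp only [RingHom.id_apply]
        rw [Module.Quotient.mk_smul_mk, hψ, hψ, map_smul]
        funext i
        exact (smul_quot P r (φ m i)).symm }
  have hgsurj : Function.Surjective g := hψsurj
  have h1 : Module.finrank K (Fin n → V) ≤ Module.finrank K W := by
    calc Module.finrank K (Fin n → V)
        = Module.finrank K (⊤ : Submodule K (Fin n → V)) := (finrank_top _ _).symm
      _ = Module.finrank K (LinearMap.range g) := by
          rw [LinearMap.range_eq_top.mpr hgsurj]
      _ ≤ Module.finrank K W := LinearMap.finrank_range_le g
  have h2 : Module.finrank K (Fin n → V) = n * Module.finrank K V := by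
    rw [Module.finrank_pi_fintype K (M := fun _ : Fin n => V)]
    simp [Finset.sum_const, mul_comm]
  show n * Module.finrank K V ≤ Module.finrank K W
  rw [← h2]
  exact h1

end residue

end MuProof

set_option maxHeartbeats 1600000 in
/-- For a Noetherian ring `R` of finite Krull dimension `d` and a finitely generated
module `M`, one has `n·μ(M) − n·d ≤ μ(M^{⊕n}) ≤ n·μ(M)` for every `n`. -/
theorem mu_pow_bounds {R : Type*} [CommRing R] [IsNoetherianRing R] (d : ℕ)
    (hd : ringKrullDim R = d) (M : Type*) [AddCommGroup M] [Module R M]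
    [Module.Finite R M] (n : ℕ) :
    mu R (Fin n → M) ≤ n * mu R M ∧ n * mu R M ≤ mu R (Fin n → M) + n * d := by
  classical
  open Submodule MuProof in
  constructor
  · -- upper bound
    obtain ⟨s, hscard, hs⟩ := mu_spec R M
    set t : Finset (Fin n → M) :=
      Finset.univ.biUnion (fun i => s.image (fun m => Pi.single i m)) with ht
    have hcard : t.card ≤ n * mu R M := by
      refine (Finset.card_biUnion_le).trans ?_
      have h1 : ∑ i : Fin n, (s.image fun m => (Pi.single i m : Fin n → M)).card ≤
          ∑ _i : Fin n, s.card :=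
        Finset.sum_le_sum (fun i _ => Finset.card_image_le)
      refine h1.trans (le_of_eq ?_)
      rw [hscard]
      simp [Finset.sum_const, mul_comm]
    refine le_trans (mu_le_card ?_) hcard
    rw [eq_top_iff]
    rintro x -
    have hxsum : x = ∑ i : Fin n, Pi.single i (x i) := (Finset.univ_sum_single x).symm
    rw [hxsum]
    refine Submodule.sum_mem _ fun i _ => ?_
    have hxi : x i ∈ span R (s : Set M) := by rw [hs]; trivial
    have h1 : (LinearMap.single R (fun _ : Fin n => M) i) (x i) ∈
        Submodule.map (LinearMap.single R (fun _ : Fin n => M) i) (span R (s : Set M)) :=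
      Submodule.mem_map_of_mem hxi
    rw [Submodule.map_span] at h1
    have h2 : (⇑(LinearMap.single R (fun _ : Fin n => M) i) '' (s : Set M)) ⊆ (t : Set (Fin n → M)) := by
      rintro y ⟨m, hm, rfl⟩
      rw [LinearMap.coe_single]
      refine Finset.mem_coe.mpr (Finset.mem_biUnion.mpr ⟨i, Finset.mem_univ i, ?_⟩)
      exact Finset.mem_image_of_mem _ hm
    have h3 := (Submodule.span_mono h2) h1
    rw [LinearMap.coe_single] at h3
    exact h3
  · -- lower bound
    by_cases hM : Subsingleton M
    · simp [mu_eq_zero]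
    haveI : Nontrivial M := not_subsingleton_iff_nontrivial.mp hM
    set S : Set ℕ := (fun P : PrimeSpectrum R => rloc R M P.asIdeal + delta R P) ''
      {P : PrimeSpectrum R | Module.annihilator R M ≤ P.asIdeal} with hS
    have hSne : S.Nonempty := by
      have hann : Module.annihilator R M ≠ ⊤ := by
        intro hc
        obtain ⟨m, hm⟩ := exists_ne (0 : M)
        have h1 : (1 : R) ∈ Module.annihilator R M := by rw [hc]; trivial
        rw [Module.mem_annihilator] at h1
        exact hm (by simpa using h1 m)
      obtain ⟨P, hPmax, hPle⟩ := Ideal.exists_le_maximal _ hann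
      exact ⟨_, ⟨⟨P, hPmax.isPrime⟩, hPle, rfl⟩⟩
    have hSbdd : BddAbove S := by
      refine ⟨mu R M + d, ?_⟩
      rintro x ⟨P, hP, rfl⟩
      show rloc R M P.asIdeal + delta R P ≤ mu R M + d
      have h1 := rloc_le_mu (M := M) P.2.ne_top
      have h2 := delta_le hd P
      omega
    obtain ⟨P₁, hP₁ann, hP₁eq0⟩ := Nat.sSup_mem hSne hSbdd
    have hP₁eq : rloc R M P₁.asIdeal + delta R P₁ = sSup S := hP₁eq0
    have hforster : mu R M ≤ sSup S :=
      forster hd (sSup S) M (fun P hP => le_csSup hSbdd ⟨P, hP, rfl⟩)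
    obtain ⟨P₀, hP₀max, hP₀le⟩ := Ideal.exists_le_maximal P₁.asIdeal P₁.2.ne_top
    haveI := hP₀max
    have hmu : mu R M ≤ rloc R M P₀ + d := by
      have h1 : rloc R M P₁.asIdeal ≤ rloc R M P₀ := rloc_mono hP₀le hP₀max.ne_top
      have h2 := delta_le hd P₁
      omega
    have hA : rloc R M P₀ ≤ Module.finrank (R ⧸ P₀) (M ⧸ (P₀ • ⊤ : Submodule R M)) :=
      rloc_le (locGen_finrank (M := M) (P := P₀))
    have hB : Module.finrank (R ⧸ P₀) ((Fin n → M) ⧸ (P₀ • ⊤ : Submodule R (Fin n → M))) ≤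
        mu R (Fin n → M) :=
      finrank_le_of_locGen (locGen_mu (M := Fin n → M) hP₀max.ne_top)
    have hC := finrank_pi_quot_ge (M := M) (P := P₀) n
    calc n * mu R M ≤ n * (rloc R M P₀ + d) := Nat.mul_le_mul_left n hmu
      _ = n * rloc R M P₀ + n * d := Nat.mul_add n _ _
      _ ≤ n * Module.finrank (R ⧸ P₀) (M ⧸ (P₀ • ⊤ : Submodule R M)) + n * d :=
        Nat.add_le_add_right (Nat.mul_le_mul_left n hA) _
      _ ≤ Module.finrank (R ⧸ P₀) ((Fin n → M) ⧸ (P₀ • ⊤ : Submodule R (Fin n → M))) + n * d :=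
        Nat.add_le_add_right hC _
      _ ≤ mu R (Fin n → M) + n * d := Nat.add_le_add_right hB _
end
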